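/- Let G be a simple graph on a finite vertex type V and let u be a vertex. Let G' be the simple graph on Option V (V extended by one new vertex ⋆) whose edges are the edges of G together with the single new edge {⋆, u}. Let Orb_G(u) = {π(u) : π ∈ Aut(G)} be the orbit of u under Aut(G), and let Orb_{G'}(⋆) = {σ(⋆) : σ ∈ Aut(G')} be the orbit of the new vertex ⋆ under Aut(G'). Then |Orb_G(u)| · |Aut(G')| = |Orb_{G'}(⋆)| · |Aut(G)|. -/

import Mathlib

/-- The graph on `Option V` obtained from `G` by attaching a new pendant vertex
`⋆ = none` to the existing vertex `w`: its edges are the edges of `G`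
(transported along `some`) together with the single new edge `{⋆, w}`. -/
def SimpleGraph.attachPendant {V : Type*} (G : SimpleGraph V) (w : V) :
    SimpleGraph (Option V) :=
  SimpleGraph.fromEdgeSet ((Sym2.map some) '' G.edgeSet ∪ {s((none : Option V), some w)})

section Aux

variable {V : Type*} {G : SimpleGraph V} {w : V}

lemma attachPendant_adj_some_some {a b : V} :
    (G.attachPendant w).Adj (some a) (some b) ↔ G.Adj a b := by
  simp only [SimpleGraph.attachPendant, SimpleGraph.fromEdgeSet_adj, Set.mem_union,
    Set.mem_image, Set.mem_singleton_iff, ne_eq]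
  constructor
  · rintro ⟨h | h, hne⟩
    · obtain ⟨e, he, hmap⟩ := h
      induction e with
      | h x y =>
        simp only [Sym2.map_pair_eq, Sym2.eq_iff] at hmap
        rcases hmap with ⟨hx, hy⟩ | ⟨hx, hy⟩
        · obtain rfl : x = a := Option.some_injective _ hx
          obtain rfl : y = b := Option.some_injective _ hy
          exact (SimpleGraph.mem_edgeSet G).mp he
        · obtain rfl : x = b := Option.some_injective _ hx
          obtain rfl : y = a := Option.some_injective _ hy
          exact ((SimpleGraph.mem_edgeSet G).mp he).symm
    · simp only [Sym2.eq_iff] at h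
      rcases h with ⟨h, _⟩ | ⟨_, h⟩ <;> exact absurd h (by simp)
  · intro h
    refine ⟨Or.inl ⟨s(a, b), h, by simp⟩, by simpa using h.ne⟩

lemma attachPendant_adj_none {y : Option V} :
    (G.attachPendant w).Adj none y ↔ y = some w := by
  simp only [SimpleGraph.attachPendant, SimpleGraph.fromEdgeSet_adj, Set.mem_union,
    Set.mem_image, Set.mem_singleton_iff, ne_eq]
  constructor
  · rintro ⟨h | h, hne⟩
    · obtain ⟨e, he, hmap⟩ := h
      exfalso
      have : (none : Option V) ∈ Sym2.map some e := hmap ▸ (by simp)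
      obtain ⟨x, _, hx⟩ := Sym2.mem_map.mp this
      exact Option.some_ne_none x hx
    · simp only [Sym2.eq_iff] at h
      rcases h with ⟨_, h⟩ | ⟨h, _⟩
      · exact h
      · exact absurd h (by simp)
  · rintro rfl
    exact ⟨Or.inr rfl, by simp⟩

lemma attachPendant_not_adj_none_none : ¬ (G.attachPendant w).Adj none none := by
  simp

instance : MulAction (G ≃g G) V where
  smul π x := π x
  one_smul _ := rfl
  mul_smul _ _ _ := rfl

lemma iso_smul_def (π : G ≃g G) (x : V) : π • x = π x := rfl

instance : MulAction (G.attachPendant w ≃g G.attachPendant w) (Option V) where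
  smul π x := π x
  one_smul _ := rfl
  mul_smul _ _ _ := rfl

lemma iso_smul_def' (π : G.attachPendant w ≃g G.attachPendant w) (x : Option V) :
    π • x = π x := rfl

/-- Lift an automorphism fixing `w` to the pendant graph. -/
def pendLift (π : G ≃g G) (h : π w = w) :
    G.attachPendant w ≃g G.attachPendant w where
  toEquiv := π.toEquiv.optionCongr
  map_rel_iff' := by
    intro x y
    match x, y with
    | none, none => simp
    | none, some b =>
        simp only [Equiv.optionCongr_apply, Option.map_none, Option.map_some,
          attachPendant_adj_none, Option.some_inj]
        constructor
        · intro hb; exact π.toEquiv.injective (by simpa [h] using hb)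
        · rintro rfl; exact h
    | some a, none =>
        rw [(G.attachPendant w).adj_comm, (G.attachPendant w).adj_comm (some a)]
        simp only [Equiv.optionCongr_apply, Option.map_none, Option.map_some,
          attachPendant_adj_none, Option.some_inj]
        constructor
        · intro hb; exact π.toEquiv.injective (by simpa [h] using hb)
        · rintro rfl; exact h
    | some a, some b =>
        simp only [Equiv.optionCongr_apply, Option.map_some, attachPendant_adj_some_some]
        exact π.map_rel_iff

lemma stab_apply_some (σ : G.attachPendant w ≃g G.attachPendant w)
    (hσ : σ none = none) (a : V) :
    σ (some a) = some (Equiv.removeNone σ.toEquiv a) := by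
  have h : ∃ x', σ.toEquiv (some a) = some x' := by
    rcases hx : σ.toEquiv (some a) with _ | x
    · exact absurd (σ.toEquiv.injective (hx.trans hσ.symm)) (by simp)
    · exact ⟨x, rfl⟩
  have h2 := Equiv.removeNone_some σ.toEquiv h
  exact h2.symm

/-- The inverse direction: restrict a stabilizing automorphism of the pendant graph. -/
def stabRestrict (σ : G.attachPendant w ≃g G.attachPendant w) (hσ : σ none = none) :
    G ≃g G where
  toEquiv := Equiv.removeNone σ.toEquiv
  map_rel_iff' := by
    intro a b
    show G.Adj (Equiv.removeNone σ.toEquiv a) (Equiv.removeNone σ.toEquiv b) ↔ G.Adj a b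
    rw [← attachPendant_adj_some_some (w := w), ← stab_apply_some σ hσ,
      ← stab_apply_some σ hσ, σ.map_rel_iff, attachPendant_adj_some_some]

lemma stabRestrict_fix (σ : G.attachPendant w ≃g G.attachPendant w) (hσ : σ none = none) :
    stabRestrict σ hσ w = w := by
  have h1 : (G.attachPendant w).Adj none (some w) := attachPendant_adj_none.mpr rfl
  have h2 := σ.map_rel_iff.mpr h1
  rw [show σ none = none from hσ, stab_apply_some σ hσ, attachPendant_adj_none] at h2
  exact Option.some_injective _ h2

/-- The stabilizers correspond. -/
noncomputable def stabEquiv :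
    MulAction.stabilizer (G.attachPendant w ≃g G.attachPendant w) (none : Option V) ≃
      MulAction.stabilizer (G ≃g G) w where
  toFun σ := ⟨stabRestrict σ.1 σ.2, stabRestrict_fix σ.1 σ.2⟩
  invFun π := ⟨pendLift π.1 π.2, rfl⟩
  left_inv σ := by
    have hσ : σ.1 none = none := σ.2
    refine Subtype.ext (RelIso.ext fun x => ?_)
    show pendLift (stabRestrict σ.1 σ.2) (stabRestrict_fix σ.1 σ.2) x = σ.1 x
    match x with
    | none => exact hσ.symm
    | some a =>
        show some (stabRestrict σ.1 σ.2 a) = σ.1 (some a)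
        exact (stab_apply_some σ.1 hσ a).symm
  right_inv π := by
    refine Subtype.ext (RelIso.ext fun x => ?_)
    show stabRestrict (pendLift π.1 π.2) rfl x = π.1 x
    show Equiv.removeNone (pendLift π.1 π.2).toEquiv x = π.1 x
    have : (pendLift π.1 π.2).toEquiv = (π.1 : G ≃g G).toEquiv.optionCongr := rfl
    rw [this, Equiv.removeNone_optionCongr]
    rfl

end Aux

/-- With `G'` the pendant-attached graph,
`|Orb_G(u)| * |Aut(G')| = |Orb_{G'}(⋆)| * |Aut(G)|`. -/
theorem orb_mul_aut_eq_orb_mul_aut_attachPendant {V : Type*} [Fintype V]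
    (G : SimpleGraph V) (u : V) :
    Nat.card {x : V | ∃ π : G ≃g G, π u = x} *
      Nat.card (G.attachPendant u ≃g G.attachPendant u) =
    Nat.card {y : Option V | ∃ σ : G.attachPendant u ≃g G.attachPendant u,
        σ (none : Option V) = y} *
      Nat.card (G ≃g G) := by
  have horb1 : {x : V | ∃ π : G ≃g G, π u = x} = MulAction.orbit (G ≃g G) u := by
    ext x
    simp only [Set.mem_setOf_eq, MulAction.mem_orbit_iff]
    rfl
  have horb2 : {y : Option V | ∃ σ : G.attachPendant u ≃g G.attachPendant u,
      σ (none : Option V) = y}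
      = MulAction.orbit (G.attachPendant u ≃g G.attachPendant u) (none : Option V) := by
    ext y
    simp only [Set.mem_setOf_eq, MulAction.mem_orbit_iff]
    rfl
  have h1 := Nat.card_congr (MulAction.orbitProdStabilizerEquivGroup (G ≃g G) u)
  have h2 := Nat.card_congr (MulAction.orbitProdStabilizerEquivGroup
    (G.attachPendant u ≃g G.attachPendant u) (none : Option V))
  rw [Nat.card_prod] at h1 h2
  have hstab := Nat.card_congr (stabEquiv (G := G) (w := u))
  rw [horb1, horb2, ← h1, ← h2, hstab]
  ring
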